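/- Let Q ⊂ ℂ be a nonempty compact set, f : Q → ℂ continuous with zero set Z = {k ∈ Q : f(k) = 0}. For n ∈ ℕ let G_n = (1/n)(ℤ + iℤ) and define Γ_n = {k ∈ G_n ∩ Q : |f(k)| ≤ 1/log(n)} for n ≥ 2. Suppose: (a) for each k₀ ∈ Z there are C, ν > 0 and a neighborhood of k₀ in which |f(k)| ≤ C|k-k₀|^ν; (b) each k₀ ∈ Z has points of G_n ∩ Q within distance 1/n for all large n; (c) every sequence k_n ∈ Γ_n has its accumulation points in Z. If additionally |f(k_n)| → 0 along any sequence k_n ∈ Γ_n implies dist(k_n, Z) → 0, then d_H(Γ_n, Z) → 0 as n → ∞ (when Z ≠ ∅). -/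
import Mathlib


open Filter Metric

/-- The grid `G_n = (1/n)(ℤ + iℤ)` in the complex plane. -/
def latticeGrid (n : ℕ) : Set ℂ :=
  {z : ℂ | ∃ a b : ℤ, z = ((a : ℂ) + (b : ℂ) * Complex.I) / (n : ℂ)}

/-- Convergence of the thresholding algorithm: with `Z = {k ∈ Q : f(k) = 0}` nonempty and
`Γ_n = {k ∈ G_n ∩ Q : |f(k)| ≤ 1/log n}`, under the listed hypotheses (polynomial decay
near zeros, approximation of zeros by grid points, accumulation of accepted points in `Z`,
and the distance condition), we have `d_H(Γ_n, Z) → 0`. -/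
theorem thresholding_converges
    (Q : Set ℂ) (f : ℂ → ℂ)
    (hQ : IsCompact Q) (hQne : Q.Nonempty) (hf : ContinuousOn f Q)
    (Z : Set ℂ) (hZ : Z = {k ∈ Q | f k = 0}) (hZne : Z.Nonempty)
    (Γ : ℕ → Set ℂ)
    (hΓ : ∀ n, Γ n = {k ∈ latticeGrid n ∩ Q | ‖f k‖ ≤ 1 / Real.log n})
    -- (a) polynomial decay of |f| near each zero
    (ha : ∀ k₀ ∈ Z, ∃ C > (0 : ℝ), ∃ ν > (0 : ℝ), ∀ᶠ k in nhds k₀,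
      ‖f k‖ ≤ C * ‖k - k₀‖ ^ ν)
    -- (b) each zero is approximated by grid points within distance 1/n for large n
    (hb : ∀ k₀ ∈ Z, ∀ᶠ n : ℕ in atTop, ∃ j ∈ latticeGrid n ∩ Q, ‖j - k₀‖ ≤ 1 / (n : ℝ))
    -- (c) accumulation points of sequences of accepted points lie in Z
    (hc : ∀ k : ℕ → ℂ, (∀ n, k n ∈ Γ n) → ∀ x : ℂ, MapClusterPt x atTop k → x ∈ Z)
    -- additional hypothesis: |f(k_n)| → 0 along accepted points forces dist(k_n, Z) → 0
    (hd : ∀ k : ℕ → ℂ, (∀ n, k n ∈ Γ n) →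
      Tendsto (fun n => ‖f (k n)‖) atTop (nhds 0) →
      Tendsto (fun n => infDist (k n) Z) atTop (nhds 0)) :
    Tendsto (fun n => hausdorffDist (Γ n) Z) atTop (nhds 0) := by

  -- Basic facts about `Z`
  have hZQ : Z ⊆ Q := by rw [hZ]; exact fun x hx => hx.1
  have hZclosed : IsClosed Z := by
    rw [hZ]
    have : {k ∈ Q | f k = 0} = Q ∩ f ⁻¹' {0} := by
      ext x; simp [Set.mem_sep_iff]
    rw [this]
    exact hf.preimage_isClosed_of_isClosed hQ.isClosed isClosed_singleton
  have hZc : IsCompact Z := hQ.of_isClosed_subset hZclosed hZQ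
  have hone_div : Tendsto (fun n : ℕ => 1 / Real.log n) atTop (nhds 0) := by
    simp only [one_div]
    exact (Real.tendsto_log_atTop.comp tendsto_natCast_atTop_atTop).inv_tendsto_atTop
  -- key pointwise statement near each zero
  have pointB : ∀ k₀ ∈ Z, ∀ᶠ n : ℕ in atTop, ∃ j ∈ Γ n, dist k₀ j ≤ 1 / (n : ℝ) := by
    intro k₀ hk₀
    obtain ⟨C, hC, ν, hν, hnear⟩ := ha k₀ hk₀
    rw [Metric.eventually_nhds_iff] at hnear
    obtain ⟨δ, hδ, hball⟩ := hnear
    have hthr : ∀ᶠ n : ℕ in atTop, C * (1 / (n : ℝ)) ^ ν ≤ 1 / Real.log n := by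
      have h := (isLittleO_log_rpow_atTop hν).def (by positivity : (0:ℝ) < 1 / C)
      have h2 := (tendsto_natCast_atTop_atTop (R := ℝ)).eventually h
      filter_upwards [h2, eventually_ge_atTop 3] with n hn hn3
      have hn1 : (1:ℝ) < (n:ℝ) := by exact_mod_cast Nat.lt_of_lt_of_le (by norm_num) hn3
      have hlog : 0 < Real.log n := Real.log_pos hn1
      have hnp : (0:ℝ) < (n:ℝ) := by linarith
      have hrp : (0:ℝ) < (n:ℝ) ^ ν := Real.rpow_pos_of_pos hnp ν
      simp only [Real.norm_eq_abs, abs_of_pos hlog, abs_of_pos hrp] at hn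
      rw [Real.div_rpow zero_le_one hnp.le, Real.one_rpow, mul_one_div,
        div_le_div_iff₀ hrp hlog]
      calc C * Real.log ↑n ≤ C * (1 / C * (n:ℝ) ^ ν) :=
            mul_le_mul_of_nonneg_left hn hC.le
        _ = (n:ℝ) ^ ν := by field_simp
        _ = 1 * (n:ℝ) ^ ν := (one_mul _).symm
    have hsmall : ∀ᶠ n : ℕ in atTop, 1 / (n:ℝ) < δ :=
      tendsto_one_div_atTop_nhds_zero_nat.eventually_lt_const hδ
    filter_upwards [hb k₀ hk₀, hthr, hsmall] with n hbn h1 h2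
    obtain ⟨j, hjg, hjd⟩ := hbn
    have hjball : dist j k₀ < δ := by
      rw [dist_eq_norm]; exact lt_of_le_of_lt hjd h2
    have hfj : ‖f j‖ ≤ C * ‖j - k₀‖ ^ ν := hball hjball
    have h1n : (0:ℝ) ≤ 1 / (n:ℝ) := by positivity
    refine ⟨j, ?_, ?_⟩
    · rw [hΓ]
      refine ⟨hjg, ?_⟩
      calc ‖f j‖ ≤ C * ‖j - k₀‖ ^ ν := hfj
        _ ≤ C * (1 / (n:ℝ)) ^ ν :=
            mul_le_mul_of_nonneg_left (Real.rpow_le_rpow (norm_nonneg _) hjd hν.le) hC.le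
        _ ≤ 1 / Real.log n := h1
    · rw [dist_comm, dist_eq_norm]; exact hjd
  -- the main eventual bound
  have key : ∀ ε > (0:ℝ), ∀ᶠ n : ℕ in atTop, hausdorffDist (Γ n) Z ≤ ε := by
    intro ε hε
    -- Step A: accepted points are close to Z
    have stepA : ∀ᶠ n : ℕ in atTop, ∀ x ∈ Γ n, infDist x Z ≤ ε := by
      set K := Q ∩ {k : ℂ | ε ≤ infDist k Z} with hKdef
      have hKc : IsCompact K :=
        hQ.inter_right (isClosed_le continuous_const (continuous_infDist_pt Z))
      rcases K.eq_empty_or_nonempty with hKe | hKne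
      · filter_upwards with n x hx
        by_contra hcon
        push_neg at hcon
        have hxQ : x ∈ Q := by rw [hΓ n] at hx; exact hx.1.2
        have : x ∈ K := ⟨hxQ, hcon.le⟩
        rw [hKe] at this
        exact this
      · obtain ⟨k₁, hk₁K, hmin⟩ :=
          hKc.exists_isMinOn hKne ((hf.norm).mono Set.inter_subset_left)
        have hm : 0 < ‖f k₁‖ := by
          obtain ⟨hk₁Q, hk₁d⟩ := hk₁K
          rcases eq_or_lt_of_le (norm_nonneg (f k₁)) with h | h
          · exfalso
            have hk₁Z : k₁ ∈ Z := by
              rw [hZ]; exact ⟨hk₁Q, norm_eq_zero.mp h.symm⟩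
            have h0 : infDist k₁ Z = 0 := infDist_zero_of_mem hk₁Z
            have hk₁d' : ε ≤ infDist k₁ Z := hk₁d
            rw [h0] at hk₁d'
            exact absurd hk₁d' (not_le.mpr hε)
          · exact h
        have hlogev : ∀ᶠ n : ℕ in atTop, 1 / Real.log n < ‖f k₁‖ :=
          hone_div.eventually_lt_const hm
        filter_upwards [hlogev] with n hn x hx
        rw [hΓ n] at hx
        obtain ⟨⟨hxg, hxQ⟩, hxf⟩ := hx
        by_contra hcon
        push_neg at hcon
        have hxK : x ∈ K := ⟨hxQ, hcon.le⟩
        have h3 : ‖f k₁‖ ≤ ‖f x‖ := hmin hxK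
        linarith
    -- Step B: every zero is close to an accepted point
    have stepB : ∀ᶠ n : ℕ in atTop, ∀ x ∈ Z, infDist x (Γ n) ≤ ε := by
      obtain ⟨t, htZ, htcov⟩ := hZc.elim_nhds_subcover (fun x => ball x (ε/2))
        (fun x _ => ball_mem_nhds x (half_pos hε))
      have hev : ∀ᶠ n : ℕ in atTop, ∀ k₀ ∈ t, ∃ j ∈ Γ n, dist k₀ j ≤ 1 / (n:ℝ) := by
        rw [eventually_all_finset]
        exact fun k₀ hk₀ => pointB k₀ (htZ k₀ hk₀)
      have hsm : ∀ᶠ n : ℕ in atTop, 1 / (n:ℝ) < ε/2 :=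
        tendsto_one_div_atTop_nhds_zero_nat.eventually_lt_const (half_pos hε)
      filter_upwards [hev, hsm] with n h1 h2 x hxZ
      obtain ⟨k₀, hk₀t, hxk₀⟩ := Set.mem_iUnion₂.mp (htcov hxZ)
      obtain ⟨j, hjΓ, hjd⟩ := h1 k₀ hk₀t
      calc infDist x (Γ n) ≤ dist x j := infDist_le_dist_of_mem hjΓ
        _ ≤ dist x k₀ + dist k₀ j := dist_triangle _ _ _
        _ ≤ ε/2 + ε/2 := add_le_add (le_of_lt (mem_ball.mp hxk₀)) (hjd.trans h2.le)
        _ = ε := add_halves ε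
    filter_upwards [stepA, stepB] with n h1 h2
    exact hausdorffDist_le_of_infDist hε.le h1 h2
  -- conclude
  rw [Metric.tendsto_atTop]
  intro ε hε
  obtain ⟨N, hN⟩ := eventually_atTop.mp (key (ε/2) (half_pos hε))
  refine ⟨N, fun n hn => ?_⟩
  rw [Real.dist_eq, sub_zero, abs_of_nonneg hausdorffDist_nonneg]
  exact lt_of_le_of_lt (hN n hn) (half_lt_self hε)
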